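/- Fix ξ ∈ ℝ, let α = ξ and ν = ξ², let u be a normalized (α,ξ,ν)-eigenfunction, and let k₀(t) := ( −ξ/2 + (2/3)(ξ−t) ) u(t) + ( (2/3)(1−ξ²) + ξ(ξ−t) − (1/3)(ξ−t)² ) u'(t). Then ∫₀^∞ (C_ξ u)(t) k₀(t) dt + ∫₀^∞ (C_{ξ,2} u)(t) u(t) dt = (ξ/6) u(0)². -/

import Mathlib

open MeasureTheory

/-- An `(α,ξ,ν)`-eigenfunction: a smooth function on `ℝ` which, together with all its
derivatives, decays faster than any polynomial on `[0,∞)`, solves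
`−u'' + ((ξ−t)² + 1)u = νu` on `[0,∞)`, and satisfies the Robin condition
`u'(0) = (α−ξ)u(0)`. -/
def IsEigen (α ξ ν : ℝ) (u : ℝ → ℝ) : Prop :=
  ContDiff ℝ (⊤ : ℕ∞) u ∧
  (∀ n k : ℕ, ∃ C : ℝ, ∀ t : ℝ, 0 ≤ t → |t| ^ k * |iteratedDeriv n u t| ≤ C) ∧
  (∀ t : ℝ, 0 ≤ t → -(deriv (deriv u) t) + ((ξ - t) ^ 2 + 1) * u t = ν * u t) ∧
  deriv u 0 = (α - ξ) * u 0

/-- The operator `C_ξ w = 2( t·(n₀w) − ξw − w' + t²(ξ−t)w )`, where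
`(n₀w)(t) = −w''(t) + ((ξ−t)² + 1)w(t)`. -/
noncomputable def Cxi (ξ : ℝ) (w : ℝ → ℝ) (t : ℝ) : ℝ :=
  2 * (t * (-(deriv (deriv w) t) + ((ξ - t) ^ 2 + 1) * w t)
    - ξ * w t - deriv w t + t ^ 2 * (ξ - t) * w t)

/-- The operator
`C_{ξ,2} w = −4t(w' + (ξ−t)w) + 2t²(n₀w) + (8/3)(ξ−t)t³w − 4t²w + t⁴w`. -/
noncomputable def Cxi2 (ξ : ℝ) (w : ℝ → ℝ) (t : ℝ) : ℝ :=
  -4 * t * (deriv w t + (ξ - t) * w t)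
    + 2 * t ^ 2 * (-(deriv (deriv w) t) + ((ξ - t) ^ 2 + 1) * w t)
    + 8 / 3 * (ξ - t) * t ^ 3 * w t - 4 * t ^ 2 * w t + t ^ 4 * w t

/-- The explicit corrector
`k₀ = (−ξ/2 + (2/3)(ξ−t))u + ((2/3)(1−ξ²) + ξ(ξ−t) − (1/3)(ξ−t)²)u'`. -/
noncomputable def kzero (ξ : ℝ) (u : ℝ → ℝ) (t : ℝ) : ℝ :=
  (-ξ / 2 + 2 / 3 * (ξ - t)) * u t
    + (2 / 3 * (1 - ξ ^ 2) + ξ * (ξ - t) - 1 / 3 * (ξ - t) ^ 2) * deriv u t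

/-! ### Auxiliary decay machinery -/

/-- Rapid decay on `[0,∞)`. -/
def RDecay (f : ℝ → ℝ) : Prop := ∀ k : ℕ, ∃ C : ℝ, ∀ t : ℝ, 0 ≤ t → |t| ^ k * |f t| ≤ C

namespace RDecay

theorem congr {f g : ℝ → ℝ} (hf : RDecay f) (h : ∀ t, f t = g t) : RDecay g := by
  intro k
  obtain ⟨C, hC⟩ := hf k
  exact ⟨C, fun t ht => by rw [← h t]; exact hC t ht⟩

theorem add {f g : ℝ → ℝ} (hf : RDecay f) (hg : RDecay g) :
    RDecay (fun t => f t + g t) := by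
  intro k
  obtain ⟨C, hC⟩ := hf k
  obtain ⟨D, hD⟩ := hg k
  refine ⟨C + D, fun t ht => ?_⟩
  calc |t| ^ k * |f t + g t| ≤ |t| ^ k * (|f t| + |g t|) := by
        exact mul_le_mul_of_nonneg_left (abs_add_le _ _) (by positivity)
    _ = |t| ^ k * |f t| + |t| ^ k * |g t| := by ring
    _ ≤ C + D := add_le_add (hC t ht) (hD t ht)

theorem const_mul {f : ℝ → ℝ} (hf : RDecay f) (c : ℝ) :
    RDecay (fun t => c * f t) := by
  intro k
  obtain ⟨C, hC⟩ := hf k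
  refine ⟨|c| * max C 0, fun t ht => ?_⟩
  have h1 : |t| ^ k * |f t| ≤ max C 0 := (hC t ht).trans (le_max_left _ _)
  calc |t| ^ k * |c * f t| = |c| * (|t| ^ k * |f t|) := by rw [abs_mul]; ring
    _ ≤ |c| * max C 0 := mul_le_mul_of_nonneg_left h1 (abs_nonneg _)

theorem pow_mul {f : ℝ → ℝ} (hf : RDecay f) (i : ℕ) :
    RDecay (fun t => t ^ i * f t) := by
  intro k
  obtain ⟨C, hC⟩ := hf (k + i)
  refine ⟨C, fun t ht => ?_⟩
  calc |t| ^ k * |t ^ i * f t| = |t| ^ (k + i) * |f t| := by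
        rw [abs_mul, abs_pow, pow_add]; ring
    _ ≤ C := hC t ht

theorem mul {f g : ℝ → ℝ} (hf : RDecay f) (hg : RDecay g) :
    RDecay (fun t => f t * g t) := by
  intro k
  obtain ⟨C, hC⟩ := hf k
  obtain ⟨D, hD⟩ := hg 0
  refine ⟨max C 0 * max D 0, fun t ht => ?_⟩
  have h1 : |t| ^ k * |f t| ≤ max C 0 := (hC t ht).trans (le_max_left _ _)
  have h2 : |g t| ≤ max D 0 := by
    have h := hD t ht
    simp only [pow_zero, one_mul] at h
    exact h.trans (le_max_left _ _)
  calc |t| ^ k * |f t * g t| = (|t| ^ k * |f t|) * |g t| := by rw [abs_mul]; ring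
    _ ≤ max C 0 * max D 0 :=
        mul_le_mul h1 h2 (abs_nonneg _) (le_max_right _ _)

theorem bound {f : ℝ → ℝ} (hf : RDecay f) :
    ∃ M : ℝ, 0 ≤ M ∧ ∀ t : ℝ, 0 ≤ t → |f t| ≤ M * (1 + t ^ 2)⁻¹ := by
  obtain ⟨C0, hC0⟩ := hf 0
  obtain ⟨C2, hC2⟩ := hf 2
  refine ⟨|C0| + |C2|, by positivity, fun t ht => ?_⟩
  have h0 : |f t| ≤ |C0| := by
    have := hC0 t ht; simp only [pow_zero, one_mul] at this
    exact this.trans (le_abs_self _)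
  have h2 : t ^ 2 * |f t| ≤ |C2| := by
    have := hC2 t ht
    rw [sq_abs] at this
    exact this.trans (le_abs_self _)
  have hpos : (0 : ℝ) < 1 + t ^ 2 := by positivity
  have key : |f t| * (1 + t ^ 2) ≤ |C0| + |C2| := by nlinarith [abs_nonneg (f t)]
  calc |f t| = |f t| * (1 + t ^ 2) * (1 + t ^ 2)⁻¹ := by field_simp
    _ ≤ (|C0| + |C2|) * (1 + t ^ 2)⁻¹ :=
        mul_le_mul_of_nonneg_right key (by positivity)

theorem integrableOn {f : ℝ → ℝ} (hf : RDecay f) (hc : Continuous f) :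
    IntegrableOn f (Set.Ioi (0 : ℝ)) := by
  obtain ⟨M, hM0, hM⟩ := hf.bound
  have hint : IntegrableOn (fun t : ℝ => M * (1 + t ^ 2)⁻¹) (Set.Ioi (0 : ℝ)) :=
    (integrable_inv_one_add_sq.const_mul M).integrableOn
  refine MeasureTheory.Integrable.mono hint hc.aestronglyMeasurable.restrict ?_
  rw [MeasureTheory.ae_restrict_iff' measurableSet_Ioi]
  filter_upwards with t ht
  have h1 := hM t (le_of_lt ht)
  have h2 : ‖M * (1 + t ^ 2)⁻¹‖ = M * (1 + t ^ 2)⁻¹ :=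
    Real.norm_of_nonneg (by positivity)
  rw [Real.norm_eq_abs, h2]
  exact h1

theorem tendsto_zero {f : ℝ → ℝ} (hf : RDecay f) :
    Filter.Tendsto f Filter.atTop (nhds 0) := by
  obtain ⟨M, hM0, hM⟩ := hf.bound
  apply squeeze_zero_norm' (a := fun t : ℝ => M * (1 + t ^ 2)⁻¹)
  · filter_upwards [Filter.eventually_ge_atTop (0 : ℝ)] with t ht
    rw [Real.norm_eq_abs]
    exact hM t ht
  · have h1 : Filter.Tendsto (fun t : ℝ => 1 + t ^ 2) Filter.atTop Filter.atTop :=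
      Filter.tendsto_atTop_add_const_left _ 1
        (Filter.tendsto_pow_atTop (two_ne_zero))
    have h2 := h1.inv_tendsto_atTop
    have := h2.const_mul M
    simpa using this

end RDecay

/-- Derivative of a quartic polynomial. -/
theorem quartic_hasDerivAt (c0 c1 c2 c3 c4 t : ℝ) :
    HasDerivAt (fun s : ℝ => c0 + c1 * s + c2 * s ^ 2 + c3 * s ^ 3 + c4 * s ^ 4)
      (c1 + 2 * c2 * t + 3 * c3 * t ^ 2 + 4 * c4 * t ^ 3) t := by
  have h : HasDerivAt
      (fun s : ℝ => c0 + (c1 * s ^ 1 + (c2 * s ^ 2 + (c3 * s ^ 3 + c4 * s ^ 4))))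
      (c1 * ((1 : ℕ) * t ^ (1 - 1)) + (c2 * ((2 : ℕ) * t ^ (2 - 1)) +
        (c3 * ((3 : ℕ) * t ^ (3 - 1)) + c4 * ((4 : ℕ) * t ^ (4 - 1))))) t := by
    exact (((hasDerivAt_pow 1 t).const_mul c1).add
      (((hasDerivAt_pow 2 t).const_mul c2).add
        (((hasDerivAt_pow 3 t).const_mul c3).add
          ((hasDerivAt_pow 4 t).const_mul c4)))).const_add c0
  have hfun : (fun s : ℝ => c0 + c1 * s + c2 * s ^ 2 + c3 * s ^ 3 + c4 * s ^ 4)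
      = (fun s : ℝ => c0 + (c1 * s ^ 1 + (c2 * s ^ 2 + (c3 * s ^ 3 + c4 * s ^ 4)))) := by
    funext s; ring
  rw [hfun]
  convert h using 1
  push_cast
  ring

/-- For a normalized `(ξ,ξ,ξ²)`-eigenfunction `u`,
`∫₀^∞ (C_ξ u) k₀ dt + ∫₀^∞ (C_{ξ,2} u) u dt = (ξ/6)u(0)²`. -/
theorem Cxi_combined_expectation
    (ξ : ℝ) (u : ℝ → ℝ) (hu : IsEigen ξ ξ (ξ ^ 2) u)
    (hnorm : ∫ t in Set.Ioi (0 : ℝ), u t ^ 2 = 1) :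
    (∫ t in Set.Ioi (0 : ℝ), Cxi ξ u t * kzero ξ u t)
        + (∫ t in Set.Ioi (0 : ℝ), Cxi2 ξ u t * u t)
      = ξ / 6 * u 0 ^ 2 := by
  obtain ⟨hsmooth, hdecay, hODE, hRobin⟩ := hu
  -- smoothness consequences
  have hs : Differentiable ℝ u ∧ ContDiff ℝ (⊤ : ℕ∞) (deriv u) :=
    contDiff_infty_iff_deriv.mp hsmooth
  have hs2 : Differentiable ℝ (deriv u) ∧ ContDiff ℝ (⊤ : ℕ∞) (deriv (deriv u)) :=
    contDiff_infty_iff_deriv.mp hs.2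
  have hcu : Continuous u := hsmooth.continuous
  have hcu' : Continuous (deriv u) := hs.2.continuous
  have hcu'' : Continuous (deriv (deriv u)) := hs2.2.continuous
  -- decay of u, u', u''
  have hDu : RDecay u := by
    intro k
    obtain ⟨C, hC⟩ := hdecay 0 k
    exact ⟨C, fun t ht => by simpa [iteratedDeriv_zero] using hC t ht⟩
  have hDu' : RDecay (deriv u) := by
    intro k
    obtain ⟨C, hC⟩ := hdecay 1 k
    exact ⟨C, fun t ht => by simpa [iteratedDeriv_one] using hC t ht⟩
  have hDu'' : RDecay (deriv (deriv u)) := by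
    intro k
    obtain ⟨C, hC⟩ := hdecay 2 k
    have h2 : iteratedDeriv 2 u = deriv (deriv u) := by
      rw [show (2 : ℕ) = 1 + 1 from rfl, iteratedDeriv_succ, iteratedDeriv_one]
    exact ⟨C, fun t ht => by rw [← h2]; exact hC t ht⟩
  -- decay of the integrands
  have hDCxi : RDecay (fun t => Cxi ξ u t) := by
    refine RDecay.congr (f := fun t =>
      (-(2 * ξ)) * u t + ((2 * ξ ^ 2 + 2) * (t ^ 1 * u t) +
        ((-(2 * ξ)) * (t ^ 2 * u t) + ((-2 : ℝ) * deriv u t +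
          ((-2 : ℝ) * (t ^ 1 * deriv (deriv u) t)))))) ?_ ?_
    · exact (hDu.const_mul _).add (((hDu.pow_mul 1).const_mul _).add
        (((hDu.pow_mul 2).const_mul _).add ((hDu'.const_mul _).add
          ((hDu''.pow_mul 1).const_mul _))))
    · intro t; simp only [Cxi]; ring
  have hDk0 : RDecay (fun t => kzero ξ u t) := by
    refine RDecay.congr (f := fun t =>
      (ξ / 6) * u t + ((-(2 : ℝ) / 3) * (t ^ 1 * u t) +
        ((2 / 3 : ℝ) * deriv u t + ((-(ξ / 3)) * (t ^ 1 * deriv u t) +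
          ((-(1 : ℝ) / 3) * (t ^ 2 * deriv u t)))))) ?_ ?_
    · exact (hDu.const_mul _).add (((hDu.pow_mul 1).const_mul _).add
        ((hDu'.const_mul _).add (((hDu'.pow_mul 1).const_mul _).add
          ((hDu'.pow_mul 2).const_mul _))))
    · intro t; simp only [kzero]; ring
  have hDCxi2 : RDecay (fun t => Cxi2 ξ u t) := by
    refine RDecay.congr (f := fun t =>
      (-4 : ℝ) * (t ^ 1 * deriv u t) + ((-2 : ℝ) * (t ^ 2 * deriv (deriv u) t) +
        ((-(4 * ξ)) * (t ^ 1 * u t) + ((2 * ξ ^ 2 + 2) * (t ^ 2 * u t) +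
          ((-(4 * ξ / 3)) * (t ^ 3 * u t) + ((1 / 3 : ℝ) * (t ^ 4 * u t))))))) ?_ ?_
    · exact ((hDu'.pow_mul 1).const_mul _).add (((hDu''.pow_mul 2).const_mul _).add
        (((hDu.pow_mul 1).const_mul _).add (((hDu.pow_mul 2).const_mul _).add
          (((hDu.pow_mul 3).const_mul _).add ((hDu.pow_mul 4).const_mul _)))))
    · intro t; simp only [Cxi2]; ring
  have hD1 : RDecay (fun t => Cxi ξ u t * kzero ξ u t) := hDCxi.mul hDk0
  have hD2 : RDecay (fun t => Cxi2 ξ u t * u t) := hDCxi2.mul hDu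
  -- continuity of the integrands
  have hc1 : Continuous (fun t => Cxi ξ u t * kzero ξ u t) := by
    simp only [Cxi, kzero]; fun_prop
  have hc2 : Continuous (fun t => Cxi2 ξ u t * u t) := by
    simp only [Cxi2]; fun_prop
  have hint1 : IntegrableOn (fun t => Cxi ξ u t * kzero ξ u t) (Set.Ioi (0 : ℝ)) :=
    hD1.integrableOn hc1
  have hint2 : IntegrableOn (fun t => Cxi2 ξ u t * u t) (Set.Ioi (0 : ℝ)) :=
    hD2.integrableOn hc2
  -- the antiderivative F
  set F : ℝ → ℝ := fun s =>
    (-ξ / 6 + (1 / 6 - ξ ^ 2 / 6) * s + (-(4 * ξ / 3)) * s ^ 2 +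
        (1 / 6 + ξ ^ 2 / 6) * s ^ 3 + (ξ / 6) * s ^ 4) * (u s * u s) +
    ((-1 / 6 - ξ ^ 2 / 6) + (-(ξ / 3)) * s + (-1 / 3 : ℝ) * s ^ 2 +
        (0 : ℝ) * s ^ 3 + (0 : ℝ) * s ^ 4) * (u s * deriv u s) +
    (-ξ / 2 + (-7 / 6 + ξ ^ 2 / 6) * s + (ξ / 2) * s ^ 2 +
        (1 / 3 : ℝ) * s ^ 3 + (0 : ℝ) * s ^ 4) * (deriv u s * deriv u s)
    with hFdef
  have key : ∀ t : ℝ, 0 ≤ t →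
      HasDerivAt F (Cxi ξ u t * kzero ξ u t + Cxi2 ξ u t * u t) t := by
    intro t ht
    have h1 : HasDerivAt u (deriv u t) t := (hs.1 t).hasDerivAt
    have h2 : HasDerivAt (deriv u) (deriv (deriv u) t) t := (hs2.1 t).hasDerivAt
    have hdd : deriv (deriv u) t = ((ξ - t) ^ 2 + 1) * u t - ξ ^ 2 * u t := by
      have h := hODE t ht; linarith
    have hF := (((quartic_hasDerivAt (-ξ / 6) (1 / 6 - ξ ^ 2 / 6) (-(4 * ξ / 3))
        (1 / 6 + ξ ^ 2 / 6) (ξ / 6) t).mul (h1.mul h1)).add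
      ((quartic_hasDerivAt (-1 / 6 - ξ ^ 2 / 6) (-(ξ / 3)) (-1 / 3) 0 0 t).mul
        (h1.mul h2))).add
      ((quartic_hasDerivAt (-ξ / 2) (-7 / 6 + ξ ^ 2 / 6) (ξ / 2) (1 / 3) 0 t).mul
        (h2.mul h2))
    refine hF.congr_deriv ?_
    simp only [Cxi, Cxi2, kzero, Pi.mul_apply]
    rw [hdd]
    ring
  have hDF : RDecay F := by
    refine RDecay.congr (f := fun t =>
      (-ξ / 6) * (u t * u t) + ((1 / 6 - ξ ^ 2 / 6) * (t ^ 1 * (u t * u t)) +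
        ((-(4 * ξ / 3)) * (t ^ 2 * (u t * u t)) +
          ((1 / 6 + ξ ^ 2 / 6) * (t ^ 3 * (u t * u t)) +
            ((ξ / 6) * (t ^ 4 * (u t * u t)) +
              ((-1 / 6 - ξ ^ 2 / 6) * (u t * deriv u t) +
                ((-(ξ / 3)) * (t ^ 1 * (u t * deriv u t)) +
                  ((-1 / 3 : ℝ) * (t ^ 2 * (u t * deriv u t)) +
                    ((-ξ / 2) * (deriv u t * deriv u t) +
                      ((-7 / 6 + ξ ^ 2 / 6) * (t ^ 1 * (deriv u t * deriv u t)) +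
                        ((ξ / 2) * (t ^ 2 * (deriv u t * deriv u t)) +
                          (1 / 3 : ℝ) * (t ^ 3 * (deriv u t * deriv u t)))))))))))))
      ?_ ?_
    · exact ((hDu.mul hDu).const_mul _).add ((((hDu.mul hDu).pow_mul 1).const_mul _).add
        ((((hDu.mul hDu).pow_mul 2).const_mul _).add
          ((((hDu.mul hDu).pow_mul 3).const_mul _).add
            ((((hDu.mul hDu).pow_mul 4).const_mul _).add
              (((hDu.mul hDu').const_mul _).add
                ((((hDu.mul hDu').pow_mul 1).const_mul _).add
                  ((((hDu.mul hDu').pow_mul 2).const_mul _).add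
                    (((hDu'.mul hDu').const_mul _).add
                      ((((hDu'.mul hDu').pow_mul 1).const_mul _).add
                        ((((hDu'.mul hDu').pow_mul 2).const_mul _).add
                          (((hDu'.mul hDu').pow_mul 3).const_mul _)))))))))))
    · intro t; simp only [hFdef]; ring
  have hTend : Filter.Tendsto F Filter.atTop (nhds 0) := hDF.tendsto_zero
  have hkey := integral_Ioi_of_hasDerivAt_of_tendsto'
    (f := F) (f' := fun t => Cxi ξ u t * kzero ξ u t + Cxi2 ξ u t * u t) (a := 0)
    (fun x hx => key x hx) (hint1.add hint2) hTend
  rw [MeasureTheory.integral_add hint1 hint2] at hkey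
  rw [hkey]
  have hRobin0 : deriv u 0 = 0 := by simpa using hRobin
  simp only [hFdef]
  rw [hRobin0]
  ring
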